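/- Let $p$ be a prime and let $\alpha \geq 1$ with $p^\alpha \parallel (q_1, q_2, q_3)$ (i.e., $p^\alpha \mid (q_1,q_2,q_3)$ and $p^{\alpha+1} \nmid (q_1,q_2,q_3)$), and suppose $n \equiv a_1 + a_2 + a_3 \pmod{(q_1,q_2,q_3)}$. Define $\lambda(p^k) := \frac{\varphi(q_1)\varphi(q_2)\varphi(q_3)}{\varphi([q_1,p^k])\varphi([q_2,p^k])\varphi([q_3,p^k])} b(p^k)$ where $b(p^k) = \sum_{a < p^k, (a,p)=1} c_1(a,p^k) c_2(a,p^k) c_3(a,p^k) e(-na/p^k)$. Then $1 + \lambda(p) + \lambda(p^2) + \cdots + \lambda(p^\alpha) = p^\alpha$. -/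

import Mathlib

open Finset

/-- `e(x) = e^{2πix}`. -/
noncomputable def e (x : ℂ) : ℂ := Complex.exp (2 * Real.pi * Complex.I * x)

/-- The generalized Ramanujan sum. -/
noncomputable def ramanujanC (aj : ℤ) (qj : ℕ) (a : ℤ) (q : ℕ) : ℂ :=
  ∑ k ∈ (Finset.Icc 1 q).filter
      (fun k => Nat.Coprime k q ∧ (k : ℤ) % (Nat.gcd qj q : ℤ) = aj % (Nat.gcd qj q : ℤ)),
    e ((a : ℂ) * k / q)

/-- `b(q) = ∑_{a < q, (a,q)=1} c₁(a,q) c₂(a,q) c₃(a,q) e(-na/q)`. -/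
noncomputable def bfun (n a1 a2 a3 : ℤ) (q1 q2 q3 : ℕ) (q : ℕ) : ℂ :=
  ∑ a ∈ (Finset.range q).filter (fun a => Nat.Coprime a q),
    ramanujanC a1 q1 (a : ℤ) q * ramanujanC a2 q2 (a : ℤ) q * ramanujanC a3 q3 (a : ℤ) q *
      e (-(n : ℂ) * a / q)

/-- `λ(q)`, the summand of the singular series. -/
noncomputable def lamfun (n a1 a2 a3 : ℤ) (q1 q2 q3 : ℕ) (q : ℕ) : ℂ :=
  ((Nat.totient q1 : ℂ) * (Nat.totient q2 : ℂ) * (Nat.totient q3 : ℂ)) /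
      ((Nat.totient (Nat.lcm q1 q) : ℂ) * (Nat.totient (Nat.lcm q2 q) : ℂ) *
        (Nat.totient (Nat.lcm q3 q) : ℂ)) *
    bfun n a1 a2 a3 q1 q2 q3 q

lemma e_add (x y : ℂ) : e (x + y) = e x * e y := by
  simp [e, mul_add, Complex.exp_add]

lemma e_int (z : ℤ) : e (z : ℂ) = 1 := by
  rw [e, mul_comm]; exact Complex.exp_int_mul_two_pi_mul_I z

lemma ram_filter_single (aj : ℤ) (qj Q : ℕ) (hQ : 1 < Q) (hdvd : Q ∣ qj)
    (haj : Int.gcd aj qj = 1) :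
    (Finset.Icc 1 Q).filter
      (fun k => Nat.Coprime k Q ∧ (k : ℤ) % (Nat.gcd qj Q : ℤ) = aj % (Nat.gcd qj Q : ℤ))
      = {(aj % (Q : ℤ)).toNat} := by
  have hQ0 : (0 : ℤ) < (Q : ℤ) := by exact_mod_cast Nat.lt_of_lt_of_le Nat.zero_lt_one hQ.le
  have hg : Nat.gcd qj Q = Q := Nat.gcd_eq_right hdvd
  have hmod_nonneg : 0 ≤ aj % (Q : ℤ) := Int.emod_nonneg aj (ne_of_gt hQ0)
  have hmod_lt : aj % (Q : ℤ) < Q := Int.emod_lt_of_pos aj hQ0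
  have hmod_ne : aj % (Q : ℤ) ≠ 0 := by
    intro h
    have hdQ : (Q : ℤ) ∣ aj := Int.dvd_of_emod_eq_zero h
    have : (Q : ℤ) ∣ (Int.gcd aj qj : ℤ) := Int.dvd_coe_gcd hdQ (Int.natCast_dvd_natCast.mpr hdvd)
    rw [haj] at this
    have : (Q : ℤ) ≤ 1 := Int.le_of_dvd one_pos this
    omega
  set m : ℕ := (aj % (Q : ℤ)).toNat with hm
  have hmz : (m : ℤ) = aj % (Q : ℤ) := Int.toNat_of_nonneg hmod_nonneg
  have hcop : Nat.Coprime m Q := by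
    rw [Nat.coprime_comm]
    -- gcd Q m divides gcd aj qj = 1
    have h1 : (Nat.gcd Q m : ℤ) ∣ aj := by
      have hdm : (Nat.gcd Q m : ℤ) ∣ (m : ℤ) := Int.natCast_dvd_natCast.mpr (Nat.gcd_dvd_right _ _)
      have hdQ' : (Nat.gcd Q m : ℤ) ∣ (Q : ℤ) := Int.natCast_dvd_natCast.mpr (Nat.gcd_dvd_left _ _)
      have : aj = (Q : ℤ) * (aj / Q) + m := by rw [hmz]; exact (Int.mul_ediv_add_emod aj Q).symm
      rw [this]; exact dvd_add (hdQ'.mul_right _) hdm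
    have h2 : (Nat.gcd Q m : ℤ) ∣ (qj : ℤ) :=
      Int.natCast_dvd_natCast.mpr ((Nat.gcd_dvd_left _ _).trans hdvd)
    have h3 : (Nat.gcd Q m : ℤ) ∣ (Int.gcd aj qj : ℤ) := Int.dvd_coe_gcd h1 h2
    rw [haj] at h3
    exact Nat.eq_one_of_dvd_one (Int.natCast_dvd_natCast.mp (by exact_mod_cast h3))
  ext k
  simp only [Finset.mem_filter, Finset.mem_Icc, Finset.mem_singleton, hg]
  constructor
  · rintro ⟨⟨hk1, hkQ⟩, hkcop, hkmod⟩
    have hklt : k < Q := by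
      rcases lt_or_eq_of_le hkQ with h | h
      · exact h
      · exfalso
        rw [h] at hkcop
        have : Q = 1 := by simpa [Nat.Coprime, Nat.gcd_self] using hkcop
        omega
    have : (k : ℤ) % (Q : ℤ) = (k : ℤ) := Int.emod_eq_of_lt (by positivity) (by exact_mod_cast hklt)
    rw [this] at hkmod
    omega
  · rintro rfl
    refine ⟨⟨by omega, by omega⟩, hcop, ?_⟩
    rw [hmz, Int.emod_emod_of_dvd _ dvd_rfl]

lemma ram_eq (aj : ℤ) (qj Q : ℕ) (hQ : 1 < Q) (hdvd : Q ∣ qj)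
    (haj : Int.gcd aj qj = 1) (a : ℤ) :
    ramanujanC aj qj a Q = e ((a : ℂ) * ((aj % (Q : ℤ)).toNat : ℕ) / Q) := by
  rw [ramanujanC, ram_filter_single aj qj Q hQ hdvd haj, Finset.sum_singleton]

lemma bfun_eq (n a1 a2 a3 : ℤ) (q1 q2 q3 Q : ℕ) (hQ : 1 < Q)
    (hd1 : Q ∣ q1) (hd2 : Q ∣ q2) (hd3 : Q ∣ q3)
    (ha1 : Int.gcd a1 q1 = 1) (ha2 : Int.gcd a2 q2 = 1) (ha3 : Int.gcd a3 q3 = 1)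
    (hcong : (Q : ℤ) ∣ (a1 + a2 + a3 - n)) :
    bfun n a1 a2 a3 q1 q2 q3 Q = (Nat.totient Q : ℂ) := by
  have hQ0 : (Q : ℂ) ≠ 0 := Nat.cast_ne_zero.mpr (by omega)
  set m1 : ℕ := (a1 % (Q : ℤ)).toNat
  set m2 : ℕ := (a2 % (Q : ℤ)).toNat
  set m3 : ℕ := (a3 % (Q : ℤ)).toNat
  have hQz : (0:ℤ) < Q := by exact_mod_cast lt_trans Nat.zero_lt_one hQ
  have hm1 : (m1 : ℤ) = a1 % (Q:ℤ) := Int.toNat_of_nonneg (Int.emod_nonneg _ hQz.ne')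
  have hm2 : (m2 : ℤ) = a2 % (Q:ℤ) := Int.toNat_of_nonneg (Int.emod_nonneg _ hQz.ne')
  have hm3 : (m3 : ℤ) = a3 % (Q:ℤ) := Int.toNat_of_nonneg (Int.emod_nonneg _ hQz.ne')
  have hS : (Q : ℤ) ∣ ((m1 : ℤ) + m2 + m3 - n) := by
    have h1 : (m1:ℤ) ≡ a1 [ZMOD (Q:ℤ)] := by
      show (m1:ℤ) % Q = a1 % Q
      rw [hm1]; exact Int.emod_emod_of_dvd a1 dvd_rfl
    have h2 : (m2:ℤ) ≡ a2 [ZMOD (Q:ℤ)] := by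
      show (m2:ℤ) % Q = a2 % Q
      rw [hm2]; exact Int.emod_emod_of_dvd a2 dvd_rfl
    have h3 : (m3:ℤ) ≡ a3 [ZMOD (Q:ℤ)] := by
      show (m3:ℤ) % Q = a3 % Q
      rw [hm3]; exact Int.emod_emod_of_dvd a3 dvd_rfl
    have hmod : ((m1:ℤ)+m2+m3-n) ≡ (a1+a2+a3-n) [ZMOD (Q:ℤ)] := ((h1.add h2).add h3).sub_right n
    have hd : (Q:ℤ) ∣ (a1+a2+a3-n) - ((m1:ℤ)+m2+m3-n) := hmod.dvd
    have := dvd_sub hcong hd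
    convert this using 1
    · rfl
    · rw [sub_sub_cancel]
  obtain ⟨t, ht⟩ := hS
  have hQc : ((m1:ℂ) + m2 + m3 - n) = Q * t := by exact_mod_cast congrArg (Int.cast : ℤ → ℂ) ht
  have hterm : ∀ a ∈ (Finset.range Q).filter (fun a => Nat.Coprime a Q),
      ramanujanC a1 q1 (a:ℤ) Q * ramanujanC a2 q2 (a:ℤ) Q * ramanujanC a3 q3 (a:ℤ) Q *
        e (-(n : ℂ) * a / Q) = 1 := by
    intro a _
    rw [ram_eq a1 q1 Q hQ hd1 ha1, ram_eq a2 q2 Q hQ hd2 ha2, ram_eq a3 q3 Q hQ hd3 ha3,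
      ← e_add, ← e_add, ← e_add]
    rw [show ((((a:ℤ)):ℂ) * m1 / Q + ((a:ℤ):ℂ) * m2 / Q + ((a:ℤ):ℂ) * m3 / Q
        + (-(n:ℂ) * a / Q)) = (((a : ℤ) * t : ℤ) : ℂ) from by
      push_cast
      field_simp
      linear_combination (a:ℂ) * hQc]
    exact e_int _
  rw [bfun, Finset.sum_congr rfl hterm, Finset.sum_const, nsmul_eq_mul, mul_one,
    Nat.totient_eq_card_coprime]
  norm_cast
  congr 1
  apply Finset.filter_congr
  intro x _
  simp [Nat.coprime_comm]

lemma lam_eq (n a1 a2 a3 : ℤ) (q1 q2 q3 Q : ℕ) (hQ : 1 < Q)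
    (hq1 : 1 ≤ q1) (hq2 : 1 ≤ q2) (hq3 : 1 ≤ q3)
    (hd1 : Q ∣ q1) (hd2 : Q ∣ q2) (hd3 : Q ∣ q3)
    (ha1 : Int.gcd a1 q1 = 1) (ha2 : Int.gcd a2 q2 = 1) (ha3 : Int.gcd a3 q3 = 1)
    (hcong : (Q : ℤ) ∣ (a1 + a2 + a3 - n)) :
    lamfun n a1 a2 a3 q1 q2 q3 Q = (Nat.totient Q : ℂ) := by
  have hl1 : Nat.lcm q1 Q = q1 := Nat.dvd_antisymm (Nat.lcm_dvd dvd_rfl hd1) (Nat.dvd_lcm_left _ _)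
  have hl2 : Nat.lcm q2 Q = q2 := Nat.dvd_antisymm (Nat.lcm_dvd dvd_rfl hd2) (Nat.dvd_lcm_left _ _)
  have hl3 : Nat.lcm q3 Q = q3 := Nat.dvd_antisymm (Nat.lcm_dvd dvd_rfl hd3) (Nat.dvd_lcm_left _ _)
  have ht1 : (Nat.totient q1 : ℂ) ≠ 0 := Nat.cast_ne_zero.mpr (Nat.totient_pos.mpr hq1).ne'
  have ht2 : (Nat.totient q2 : ℂ) ≠ 0 := Nat.cast_ne_zero.mpr (Nat.totient_pos.mpr hq2).ne'
  have ht3 : (Nat.totient q3 : ℂ) ≠ 0 := Nat.cast_ne_zero.mpr (Nat.totient_pos.mpr hq3).ne'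
  rw [lamfun, hl1, hl2, hl3, bfun_eq n a1 a2 a3 q1 q2 q3 Q hQ hd1 hd2 hd3 ha1 ha2 ha3 hcong,
    div_self (by simp [ht1, ht2, ht3]), one_mul]

lemma sum_totient_pow (p : ℕ) (hp : p.Prime) (α : ℕ) :
    1 + ∑ k ∈ Finset.Icc 1 α, (Nat.totient (p ^ k) : ℂ) = ((p : ℂ)) ^ α := by
  induction α with
  | zero => simp
  | succ α ih =>
    rw [Finset.sum_Icc_succ_top (by omega : 1 ≤ α + 1), ← add_assoc, ih,
      Nat.totient_prime_pow hp (Nat.succ_pos α)]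
    have : ((p - 1 : ℕ) : ℂ) = (p : ℂ) - 1 := by
      push_cast [Nat.cast_sub hp.one_le]; ring
    push_cast [this]
    ring

theorem stmt19 (p : ℕ) (hp : p.Prime) (α : ℕ) (hα : 1 ≤ α)
    (n a1 a2 a3 : ℤ) (q1 q2 q3 : ℕ)
    (hq1 : 1 ≤ q1) (hq2 : 1 ≤ q2) (hq3 : 1 ≤ q3)
    (ha1 : Int.gcd a1 q1 = 1) (ha2 : Int.gcd a2 q2 = 1) (ha3 : Int.gcd a3 q3 = 1)
    (hdvd : p ^ α ∣ Nat.gcd q1 (Nat.gcd q2 q3))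
    (hndvd : ¬ p ^ (α + 1) ∣ Nat.gcd q1 (Nat.gcd q2 q3))
    (hcong : ((Nat.gcd q1 (Nat.gcd q2 q3) : ℤ)) ∣ (a1 + a2 + a3 - n)) :
    1 + ∑ k ∈ Finset.Icc 1 α, lamfun n a1 a2 a3 q1 q2 q3 (p ^ k) = ((p : ℂ)) ^ α := by
  have hsum : ∀ k ∈ Finset.Icc 1 α,
      lamfun n a1 a2 a3 q1 q2 q3 (p ^ k) = (Nat.totient (p ^ k) : ℂ) := by
    intro k hk
    rw [Finset.mem_Icc] at hk
    have hQ : 1 < p ^ k := Nat.one_lt_pow (by omega) hp.one_lt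
    have hkα : p ^ k ∣ p ^ α := pow_dvd_pow p hk.2
    have hg : p ^ k ∣ Nat.gcd q1 (Nat.gcd q2 q3) := hkα.trans hdvd
    have hd1 : p ^ k ∣ q1 := hg.trans (Nat.gcd_dvd_left _ _)
    have hd2 : p ^ k ∣ q2 := hg.trans ((Nat.gcd_dvd_right _ _).trans (Nat.gcd_dvd_left _ _))
    have hd3 : p ^ k ∣ q3 := hg.trans ((Nat.gcd_dvd_right _ _).trans (Nat.gcd_dvd_right _ _))
    have hc : ((p ^ k : ℕ) : ℤ) ∣ (a1 + a2 + a3 - n) :=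
      (Int.natCast_dvd_natCast.mpr hg).trans hcong
    exact lam_eq n a1 a2 a3 q1 q2 q3 (p ^ k) hQ hq1 hq2 hq3 hd1 hd2 hd3 ha1 ha2 ha3 hc
  rw [Finset.sum_congr rfl hsum]
  exact sum_totient_pow p hp α
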